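/- Let α = (1+a·r(s)·cos β)⁻¹ (r(s)cos β dθ + sin β ds) be a 1-form on ℝ/2πℤ × ℝ/2πℤ × (0,M/2), with r smooth and 1 + a·r(s)·cos β > 0 everywhere. Then α ∧ dα = r(s)/(1 + a·r(s)·cos β)² dθ ∧ dβ ∧ ds; in particular α is a contact form wherever r(s) > 0. -/

import Mathlib

open Set

/-- The coefficient of α ∧ dα for α = (1 + a r(s) cos β)⁻¹ (r(s) cos β dθ + sin β ds):
writing α = P dθ + R ds (no dβ component, coefficients independent of θ), one has
α ∧ dα = (P ∂R/∂β − R ∂P/∂β) dθ ∧ dβ ∧ ds = r(s)/(1 + a r(s) cos β)² dθ ∧ dβ ∧ ds,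
and this coefficient is nonzero wherever r(s) > 0, so α is a contact form there. -/
theorem zermelo_contact_volume_form (M a : ℝ) (r : ℝ → ℝ)
    (hden : ∀ s β : ℝ, 0 < 1 + a * r s * Real.cos β) :
    ∀ s ∈ Ioo (0 : ℝ) (M / 2), ∀ β : ℝ,
      ((r s * Real.cos β / (1 + a * r s * Real.cos β)) *
          deriv (fun b => Real.sin b / (1 + a * r s * Real.cos b)) β -
        (Real.sin β / (1 + a * r s * Real.cos β)) *
          deriv (fun b => r s * Real.cos b / (1 + a * r s * Real.cos b)) β
        = r s / (1 + a * r s * Real.cos β) ^ 2) ∧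
      (0 < r s →
        (r s * Real.cos β / (1 + a * r s * Real.cos β)) *
            deriv (fun b => Real.sin b / (1 + a * r s * Real.cos b)) β -
          (Real.sin β / (1 + a * r s * Real.cos β)) *
            deriv (fun b => r s * Real.cos b / (1 + a * r s * Real.cos b)) β ≠ 0) := by
  intro s _ β
  set c : ℝ := a * r s with hc
  have hD : ∀ b : ℝ, (0:ℝ) < 1 + c * Real.cos b := fun b => hden s b
  have hDne : (1 + c * Real.cos β) ≠ 0 := (hD β).ne'
  have hDden : HasDerivAt (fun b => 1 + c * Real.cos b) (c * (-Real.sin β)) β := by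
    simpa using ((Real.hasDerivAt_cos β).const_mul c).const_add 1
  have h1 : HasDerivAt (fun b => Real.sin b / (1 + c * Real.cos b))
      ((Real.cos β * (1 + c * Real.cos β) - Real.sin β * (c * (-Real.sin β))) /
        (1 + c * Real.cos β) ^ 2) β :=
    (Real.hasDerivAt_sin β).div hDden hDne
  have h2 : HasDerivAt (fun b => r s * Real.cos b / (1 + c * Real.cos b))
      ((r s * (-Real.sin β) * (1 + c * Real.cos β) -
        r s * Real.cos β * (c * (-Real.sin β))) / (1 + c * Real.cos β) ^ 2) β :=
    ((Real.hasDerivAt_cos β).const_mul (r s)).div hDden hDne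
  rw [h1.deriv, h2.deriv]
  have key : (r s * Real.cos β / (1 + c * Real.cos β)) *
      ((Real.cos β * (1 + c * Real.cos β) - Real.sin β * (c * (-Real.sin β))) /
        (1 + c * Real.cos β) ^ 2) -
      (Real.sin β / (1 + c * Real.cos β)) *
      ((r s * (-Real.sin β) * (1 + c * Real.cos β) -
        r s * Real.cos β * (c * (-Real.sin β))) / (1 + c * Real.cos β) ^ 2)
      = r s / (1 + c * Real.cos β) ^ 2 := by
    rw [div_mul_div_comm, div_mul_div_comm, ← sub_div, div_eq_div_iff (mul_ne_zero hDne (pow_ne_zero 2 hDne)) (pow_ne_zero 2 hDne)]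
    ring_nf
    rw [Real.sin_sq]
    ring
  refine ⟨key, fun hr => ?_⟩
  rw [key]
  positivity
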